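/- In the net setting for distance-regular graphs with d → ∞ and Assumption (DR), suppose that k = 2 eventually along the net. Then the limits γ_i = lim t^i √(k_i) exist for all i ≥ 0; moreover ω_i = ω_1/2 and α_i = α_1 for all i = 2, 3, …. -/

import Mathlib

open Matrix Filter

/-- A (bundled) distance-regular graph: a finite connected simple graph of diameter `d`
with intersection numbers `a i`, `b i`, `c i` for `0 ≤ i ≤ d`; `b 0` is the valency `k`. -/
structure DRG where
  X : Type
  fin : Fintype X
  G : SimpleGraph X
  d : ℕ
  a : ℕ → ℕ
  b : ℕ → ℕ
  c : ℕ → ℕ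
  conn : G.Connected
  dist_le : ∀ x y : X, G.dist x y ≤ d
  dist_eq : ∃ x y : X, G.dist x y = d
  bd : b d = 0
  c0 : c 0 = 0
  count_c : ∀ i ≤ d, ∀ x y : X, G.dist x y = i →
      {z : X | G.Adj y z ∧ G.dist x z = i - 1}.ncard = c i
  count_a : ∀ i ≤ d, ∀ x y : X, G.dist x y = i →
      {z : X | G.Adj y z ∧ G.dist x z = i}.ncard = a i
  count_b : ∀ i ≤ d, ∀ x y : X, G.dist x y = i →
      {z : X | G.Adj y z ∧ G.dist x z = i + 1}.ncard = b i

attribute [instance] DRG.fin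

noncomputable instance (Γ : DRG) : DecidableEq Γ.X := Classical.decEq _

noncomputable instance (Γ : DRG) : DecidableRel Γ.G.Adj := fun _ _ => Classical.dec _

namespace DRG

variable (Γ : DRG)

/-- The `i`-th distance matrix (over `ℂ`). -/
noncomputable def Amat (i : ℕ) : Matrix Γ.X Γ.X ℂ :=
  Matrix.of fun x y => if Γ.G.dist x y = i then 1 else 0

/-- The adjacency algebra `A(Γ) = span_ℂ {A_0, …, A_d}`. -/
noncomputable def adjAlg : Submodule ℂ (Matrix Γ.X Γ.X ℂ) :=
  Submodule.span ℂ {M | ∃ i ≤ Γ.d, M = Γ.Amat i}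

/-- The matrix `K_t = (t^{∂(x,y)})_{x,y}` (over `ℝ`). -/
noncomputable def Kmat (t : ℝ) : Matrix Γ.X Γ.X ℝ :=
  Matrix.of fun x y => t ^ Γ.G.dist x y

/-- `t ∈ π(Γ)`, i.e. `K_t` is positive semidefinite. -/
def piMem (t : ℝ) : Prop := (Γ.Kmat t).PosSemidef

/-- The Gibbs functional `φ_t(B) = ∑_x t^{∂(x,o)} B_{x,o}` with base vertex `o`. -/
noncomputable def gibbs (t : ℝ) (o : Γ.X) (B : Matrix Γ.X Γ.X ℂ) : ℂ :=
  ∑ x : Γ.X, (t : ℂ) ^ Γ.G.dist x o * B x o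

end DRG

lemma exists_adj_dist_pred {V : Type} {G : SimpleGraph V} (hc : G.Connected) (x y : V) (i : ℕ)
    (h : G.dist x y = i + 1) : ∃ z, G.Adj y z ∧ G.dist x z = i := by
  obtain ⟨p, hp⟩ := hc.exists_walk_length_eq_dist y x
  rw [SimpleGraph.dist_comm, h] at hp
  cases p with
  | nil => simp at hp
  | cons ha q =>
    rename_i z
    refine ⟨z, ha, ?_⟩
    simp only [SimpleGraph.Walk.length_cons, Nat.add_right_cancel_iff] at hp
    have h1 : G.dist x z ≤ i := by
      simpa [hp] using SimpleGraph.dist_le q.reverse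
    have h2 : G.dist x y ≤ G.dist x z + G.dist z y := hc.dist_triangle
    have h3 : G.dist z y = 1 := SimpleGraph.dist_eq_one_iff_adj.mpr ha.symm
    omega

lemma exists_dist_of_le {V : Type} {G : SimpleGraph V} (hc : G.Connected) {d : ℕ}
    (hy : ∃ x y : V, G.dist x y = d) :
    ∀ i ≤ d, ∃ x y : V, G.dist x y = i := by
  have key : ∀ j, ∃ x y : V, G.dist x y = d - j := by
    intro j
    induction j with
    | zero => simpa using hy
    | succ n ih =>
      obtain ⟨x, y, hxy⟩ := ih
      rcases Nat.eq_zero_or_pos (d - n) with h0 | hpos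
      · exact ⟨x, y, by omega⟩
      · obtain ⟨m, hm⟩ : ∃ m, d - n = m + 1 := ⟨d - n - 1, by omega⟩
        obtain ⟨z, _, hz⟩ := exists_adj_dist_pred hc x y m (by omega)
        exact ⟨x, z, by omega⟩
  intro i hi
  obtain ⟨x, y, h⟩ := key (d - i)
  exact ⟨x, y, by omega⟩

namespace DRG
variable (Γ : DRG)

lemma a0_eq : Γ.a 0 = 0 := by
  obtain ⟨x⟩ := Γ.conn.nonempty
  have h := Γ.count_a 0 (Nat.zero_le _) x x SimpleGraph.dist_self
  rw [← h]
  convert Set.ncard_empty Γ.X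
  ext z
  simp only [Set.mem_setOf_eq, Set.mem_empty_iff_false, iff_false, not_and]
  intro hadj hdist
  exact Γ.G.irrefl ((Γ.conn.dist_eq_zero_iff.mp hdist) ▸ hadj)

lemma deg_eq (y : Γ.X) : {z : Γ.X | Γ.G.Adj y z}.ncard = Γ.b 0 := by
  have h := Γ.count_b 0 (Nat.zero_le _) y y SimpleGraph.dist_self
  rw [← h]
  congr 1
  ext z
  simp only [Set.mem_setOf_eq, Nat.zero_add]
  exact ⟨fun h => ⟨h, SimpleGraph.dist_eq_one_iff_adj.mpr h⟩, fun h => h.1⟩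

lemma sum_cab {i : ℕ} (h1 : 1 ≤ i) (h2 : i ≤ Γ.d) :
    Γ.c i + Γ.a i + Γ.b i = Γ.b 0 := by
  obtain ⟨x, y, hxy⟩ := exists_dist_of_le Γ.conn Γ.dist_eq i h2
  have hc := Γ.count_c i h2 x y hxy
  have ha := Γ.count_a i h2 x y hxy
  have hb := Γ.count_b i h2 x y hxy
  have hdeg := Γ.deg_eq y
  set S1 := {z : Γ.X | Γ.G.Adj y z ∧ Γ.G.dist x z = i - 1} with hS1
  set S2 := {z : Γ.X | Γ.G.Adj y z ∧ Γ.G.dist x z = i} with hS2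
  set S3 := {z : Γ.X | Γ.G.Adj y z ∧ Γ.G.dist x z = i + 1} with hS3
  have hunion : {z : Γ.X | Γ.G.Adj y z} = (S1 ∪ S2) ∪ S3 := by
    ext z
    simp only [hS1, hS2, hS3, Set.mem_setOf_eq, Set.mem_union]
    constructor
    · intro hz
      have hd1 : Γ.G.dist z y = 1 := SimpleGraph.dist_eq_one_iff_adj.mpr hz.symm
      have hd2 : Γ.G.dist y z = 1 := SimpleGraph.dist_eq_one_iff_adj.mpr hz
      have t1 : Γ.G.dist x z ≤ Γ.G.dist x y + Γ.G.dist y z := Γ.conn.dist_triangle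
      have t2 : Γ.G.dist x y ≤ Γ.G.dist x z + Γ.G.dist z y := Γ.conn.dist_triangle
      have hcase : Γ.G.dist x z = i - 1 ∨ Γ.G.dist x z = i ∨ Γ.G.dist x z = i + 1 := by omega
      rcases hcase with h | h | h
      · exact Or.inl (Or.inl ⟨hz, h⟩)
      · exact Or.inl (Or.inr ⟨hz, h⟩)
      · exact Or.inr ⟨hz, h⟩
    · rintro ((⟨h, _⟩ | ⟨h, _⟩) | ⟨h, _⟩) <;> exact h
  have hdisj1 : Disjoint S1 S2 := by
    rw [Set.disjoint_left]; rintro z ⟨_, hz1⟩ ⟨_, hz2⟩; omega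
  have hdisj2 : Disjoint (S1 ∪ S2) S3 := by
    rw [Set.disjoint_left]; rintro z (⟨_, hz1⟩ | ⟨_, hz1⟩) ⟨_, hz2⟩ <;> omega
  rw [hunion, Set.ncard_union_eq hdisj2, Set.ncard_union_eq hdisj1] at hdeg
  omega

lemma cab_eq (hk : Γ.b 0 = 2) {i : ℕ} (h1 : 1 ≤ i) (h2 : i < Γ.d) :
    Γ.c i = 1 ∧ Γ.a i = 0 ∧ Γ.b i = 1 := by
  have hsum := Γ.sum_cab h1 h2.le
  have hc1 : 1 ≤ Γ.c i := by
    obtain ⟨x, y, hxy⟩ := exists_dist_of_le Γ.conn Γ.dist_eq i h2.le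
    obtain ⟨z, hz, hdz⟩ := exists_adj_dist_pred Γ.conn x y (i - 1) (by omega)
    rw [← Γ.count_c i h2.le x y hxy]
    exact (Set.ncard_pos (Set.toFinite _)).mpr ⟨z, hz, by omega⟩
  have hb1 : 1 ≤ Γ.b i := by
    obtain ⟨x, w, hxw⟩ := exists_dist_of_le Γ.conn Γ.dist_eq (i + 1) h2
    obtain ⟨y, hy, hdy⟩ := exists_adj_dist_pred Γ.conn x w i hxw
    rw [← Γ.count_b i h2.le x y hdy]
    exact (Set.ncard_pos (Set.toFinite _)).mpr ⟨w, hy.symm, hxw⟩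
  omega
end DRG

section Net

variable {Λ : Type*} [Preorder Λ] [IsDirected Λ (· ≤ ·)] [Nonempty Λ]

/-- The variance `Σ_t²(A) = k(1−t)(1+t+t·a₁)` as a function of the net index. -/
noncomputable def sig2 (Γ : Λ → DRG) (t : Λ → ℝ) (l : Λ) : ℝ :=
  ((Γ l).b 0 : ℝ) * (1 - t l) * (1 + t l + t l * ((Γ l).a 1 : ℝ))

/-- `ω̄_i = c_i b_{i−1} / Σ_t²(A)`. -/
noncomputable def omegaBar (Γ : Λ → DRG) (t : Λ → ℝ) (i : ℕ) (l : Λ) : ℝ :=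
  (((Γ l).c i : ℝ) * ((Γ l).b (i - 1) : ℝ)) / sig2 Γ t l

/-- `ᾱ_i = (a_{i−1} − t·k) / Σ_t(A)`. -/
noncomputable def alphaBar (Γ : Λ → DRG) (t : Λ → ℝ) (i : ℕ) (l : Λ) : ℝ :=
  (((Γ l).a (i - 1) : ℝ) - t l * ((Γ l).b 0 : ℝ)) / Real.sqrt (sig2 Γ t l)

/-- `k_i = (b₀⋯b_{i−1})/(c₁⋯c_i)` as a real number. -/
noncomputable def kiProd (Γ : Λ → DRG) (i : ℕ) (l : Λ) : ℝ :=
  (∏ h ∈ Finset.range i, ((Γ l).b h : ℝ)) / (∏ h ∈ Finset.range i, ((Γ l).c (h + 1) : ℝ))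

/-- `γ̄_i = t^i √(k_i)`. -/
noncomputable def gammaBar (Γ : Λ → DRG) (t : Λ → ℝ) (i : ℕ) (l : Λ) : ℝ :=
  t l ^ i * Real.sqrt (kiProd Γ i l)

/-- Assumption (DR): for every `i ≥ 1` the limits `ω_i = lim ω̄_i` and `α_i = lim ᾱ_i`
exist (with prescribed values `ω i`, `αl i`) and `ω_i > 0`. -/
def AssumptionDR (Γ : Λ → DRG) (t : Λ → ℝ) (ω αl : ℕ → ℝ) : Prop :=
  ∀ i : ℕ, 1 ≤ i → 0 < ω i ∧ Tendsto (omegaBar Γ t i) atTop (nhds (ω i)) ∧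
    Tendsto (alphaBar Γ t i) atTop (nhds (αl i))

end Net

/-- Under Assumption (DR), if `k = 2` eventually, then the limits `γ_i` exist,
and moreover `ω_i = ω₁/2` and `α_i = α₁` for all `i ≥ 2`. -/
theorem stmt9 {Λ : Type*} [Preorder Λ] [IsDirected Λ (· ≤ ·)] [Nonempty Λ] [Infinite Λ]
    (Γ : Λ → DRG) (t : Λ → ℝ)
    (hpi : ∀ l : Λ, (Γ l).piMem (t l))
    (hvar : ∀ l : Λ, 0 < sig2 Γ t l)
    (hd : Tendsto (fun l : Λ => (Γ l).d) atTop atTop)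
    (ω αl : ℕ → ℝ) (hDR : AssumptionDR Γ t ω αl)
    (hk2 : ∀ᶠ l in (atTop : Filter Λ), (Γ l).b 0 = 2) :
    (∀ i : ℕ, ∃ γ : ℝ, Tendsto (gammaBar Γ t i) atTop (nhds γ)) ∧
    (∀ i : ℕ, 2 ≤ i → ω i = ω 1 / 2 ∧ αl i = αl 1) := by
  have hNe : (atTop : Filter Λ).NeBot := atTop_neBot_iff.mpr ⟨‹Nonempty Λ›, ‹_›⟩
  obtain ⟨hω1pos, hω1lim, hα1lim⟩ := hDR 1 le_rfl
  have hev : ∀ n : ℕ, ∀ᶠ l in (atTop : Filter Λ),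
      (Γ l).b 0 = 2 ∧ (∀ j, 1 ≤ j → j ≤ n → (Γ l).c j = 1 ∧ (Γ l).a j = 0 ∧ (Γ l).b j = 1) := by
    intro n
    filter_upwards [hk2, hd.eventually_gt_atTop n] with l hb hdn
    exact ⟨hb, fun j hj1 hj2 => (Γ l).cab_eq hb hj1 (by omega)⟩
  have hω1eq : ∀ᶠ l in (atTop : Filter Λ), omegaBar Γ t 1 l = 2 / sig2 Γ t l := by
    filter_upwards [hev 1] with l hl
    obtain ⟨hb, hf⟩ := hl
    obtain ⟨hc1, -, -⟩ := hf 1 le_rfl le_rfl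
    simp [omegaBar, hc1, hb]
  have hsig : Tendsto (sig2 Γ t) atTop (nhds (2 / ω 1)) := by
    have h1 : (fun l => 2 / omegaBar Γ t 1 l) =ᶠ[atTop] sig2 Γ t := by
      filter_upwards [hω1eq] with l he
      have hv := hvar l
      rw [he]
      field_simp
    have h2 : Tendsto (fun l => 2 / omegaBar Γ t 1 l) atTop (nhds (2 / ω 1)) :=
      tendsto_const_nhds.div hω1lim hω1pos.ne'
    exact h2.congr' h1
  have hteq : t =ᶠ[atTop] fun l => -(alphaBar Γ t 1 l * Real.sqrt (sig2 Γ t l)) / 2 := by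
    filter_upwards [hev 1] with l hl
    obtain ⟨hb, -⟩ := hl
    have hv := hvar l
    have hsq : Real.sqrt (sig2 Γ t l) ≠ 0 := (Real.sqrt_pos.mpr hv).ne'
    have ha0 : (Γ l).a 0 = 0 := (Γ l).a0_eq
    simp only [alphaBar, Nat.sub_self, ha0, hb]
    push_cast
    field_simp
    ring
  have ht : Tendsto t atTop (nhds (-(αl 1 * Real.sqrt (2 / ω 1)) / 2)) :=
    Tendsto.congr' hteq.symm (((hα1lim.mul hsig.sqrt).neg).div_const 2)
  constructor
  · intro i
    rcases Nat.eq_zero_or_pos i with rfl | hi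
    · refine ⟨1, ?_⟩
      have h0 : gammaBar Γ t 0 = fun _ => 1 := by
        funext l; simp [gammaBar, kiProd]
      rw [h0]; exact tendsto_const_nhds
    · refine ⟨(-(αl 1 * Real.sqrt (2 / ω 1)) / 2) ^ i * Real.sqrt 2, ?_⟩
      have heq : gammaBar Γ t i =ᶠ[atTop] fun l => t l ^ i * Real.sqrt 2 := by
        filter_upwards [hev i] with l hl
        obtain ⟨hb, hf⟩ := hl
        have hnum : (∏ h ∈ Finset.range i, ((Γ l).b h : ℝ)) = 2 := by
          rw [Finset.prod_eq_single_of_mem 0 (Finset.mem_range.mpr hi)]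
          · rw [hb]; norm_num
          · intro h hh h0
            have hh' := Finset.mem_range.mp hh
            have hb1 := (hf h (by omega) (by omega)).2.2
            rw [hb1]; norm_num
        have hden : (∏ h ∈ Finset.range i, ((Γ l).c (h + 1) : ℝ)) = 1 := by
          apply Finset.prod_eq_one
          intro h hh
          have hh' := Finset.mem_range.mp hh
          have hc1 := (hf (h + 1) (by omega) (by omega)).1
          rw [hc1]; norm_num
        simp only [gammaBar, kiProd, hnum, hden]
        norm_num
      exact Tendsto.congr' heq.symm ((ht.pow i).mul_const _)
  · intro i hi
    obtain ⟨hωipos, hωilim, hαilim⟩ := hDR i (by omega)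
    have heqω : omegaBar Γ t i =ᶠ[atTop] fun l => omegaBar Γ t 1 l / 2 := by
      filter_upwards [hev i] with l hl
      obtain ⟨hb, hf⟩ := hl
      obtain ⟨hci, -, -⟩ := hf i (by omega) le_rfl
      obtain ⟨hc1, -, -⟩ := hf 1 (by omega) (by omega)
      have hbi : (Γ l).b (i - 1) = 1 := (hf (i - 1) (by omega) (by omega)).2.2
      simp only [omegaBar, hci, hc1, hbi, hb]
      push_cast
      ring
    have heqα : alphaBar Γ t i =ᶠ[atTop] alphaBar Γ t 1 := by
      filter_upwards [hev i] with l hl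
      obtain ⟨hb, hf⟩ := hl
      have hai : (Γ l).a (i - 1) = 0 := (hf (i - 1) (by omega) (by omega)).2.1
      have ha0 : (Γ l).a 0 = 0 := (Γ l).a0_eq
      simp only [alphaBar, Nat.sub_self, hai, ha0]
    exact ⟨tendsto_nhds_unique hωilim (Tendsto.congr' heqω.symm (hω1lim.div_const 2)),
           tendsto_nhds_unique hαilim (Tendsto.congr' heqα.symm hα1lim)⟩
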